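/- Let ξ, η ∈ c₀*. The following conditions are equivalent: (i) there is a strictly increasing sequence of integers 0 = n_0 < n_1 < n_2 < … such that for every k ≥ 0 and every m > n_k, ∑_{j=n_k+1}^m ξ_j ≤ ∑_{j=n_k+1}^m η_j; (ii) ξ ≺ η and for every m ≥ 1 the set {∑_{j=1}^n (η_j − ξ_j) : n ≥ m} attains its minimum; (iii) there exists ζ ∈ c₀* with ξ ≺_b ζ and ζ_j ≤ η_j for all j; (iii') there exists ρ ∈ c₀* with ξ_j ≤ ρ_j for all j and ρ ≺_b η. -/

import Mathlib

noncomputable section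

open Filter Finset

/-- `ξ ∈ c₀*`: a nonnegative, nonincreasing sequence converging to `0`
(indexed from `0` here; the paper indexes from `1`). -/
def IsCoStar (ξ : ℕ → ℝ) : Prop :=
  (∀ n, 0 ≤ ξ n) ∧ Antitone ξ ∧ Tendsto ξ atTop (nhds 0)

/-- `ξ ≺ η` (η majorizes ξ): all partial sums of `ξ` are dominated by those of `η`. -/
def Maj (ξ η : ℕ → ℝ) : Prop :=
  ∀ n : ℕ, ∑ j ∈ range n, ξ j ≤ ∑ j ∈ range n, η j

/-- `ξ ≼ η` (η strongly majorizes ξ): `ξ ≺ η` and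
`liminf_n ∑_{j<n} (η_j - ξ_j) = 0` (the liminf taken in the extended reals). -/
def SMaj (ξ η : ℕ → ℝ) : Prop :=
  Maj ξ η ∧
    liminf (fun n => ((∑ j ∈ range n, (η j - ξ j) : ℝ) : EReal)) atTop = 0

/-- A matrix `U : ℕ × ℕ → ℝ` is orthogonal if its rows form an orthonormal family in ℓ²
and its columns form an orthonormal family in ℓ². -/
def OrthogonalMatrix (U : ℕ → ℕ → ℝ) : Prop :=
  (∀ i i', HasSum (fun j => U i j * U i' j) (if i = i' then (1 : ℝ) else 0)) ∧
  (∀ j j', HasSum (fun i => U i j * U i j') (if j = j' then (1 : ℝ) else 0))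

/-- A matrix `Q` is orthostochastic if it is the entrywise square of an orthogonal matrix. -/
def Orthostochastic (Q : ℕ → ℕ → ℝ) : Prop :=
  ∃ U : ℕ → ℕ → ℝ, OrthogonalMatrix U ∧ ∀ i j, Q i j = (U i j) ^ 2

/-- `ξ ≺_b η` (η block majorizes ξ): `ξ ≺ η` and the partial sums agree along some
strictly increasing sequence of indices tending to infinity. -/
def BMaj (ξ η : ℕ → ℝ) : Prop :=
  Maj ξ η ∧ ∃ n : ℕ → ℕ, StrictMono n ∧ (∀ k, 0 < n k) ∧
    ∀ k, ∑ j ∈ range (n k), ξ j = ∑ j ∈ range (n k), η j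

namespace Stmt16Aux

/-! ### index-of-run machinery -/

lemma idx_le {f : ℕ → ℕ} (hf0 : f 0 = 0) (j : ℕ) :
    f (Nat.findGreatest (fun t => f t ≤ j) j) ≤ j :=
  Nat.findGreatest_spec (P := fun t => f t ≤ j) (Nat.zero_le j) (by simp [hf0])

lemma idx_lt {f : ℕ → ℕ} (hf : StrictMono f) (hf0 : f 0 = 0) (j : ℕ) :
    j < f (Nat.findGreatest (fun t => f t ≤ j) j + 1) := by
  by_contra h
  push_neg at h
  have h1 : Nat.findGreatest (fun t => f t ≤ j) j + 1 ≤ j := le_trans hf.le_apply h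
  have := Nat.le_findGreatest (P := fun t => f t ≤ j) h1 h
  omega

lemma idx_eq {f : ℕ → ℕ} (hf : StrictMono f) (hf0 : f 0 = 0) {t j : ℕ}
    (h1 : f t ≤ j) (h2 : j < f (t + 1)) :
    Nat.findGreatest (fun t => f t ≤ j) j = t := by
  have hle : t ≤ Nat.findGreatest (fun t => f t ≤ j) j :=
    Nat.le_findGreatest (P := fun t => f t ≤ j) (le_trans hf.le_apply h1) h1
  by_contra hne
  have h3 : t + 1 ≤ Nat.findGreatest (fun t => f t ≤ j) j := by omega
  have := le_trans (hf.monotone h3) (idx_le hf0 j)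
  omega

/-! ### intermediate value choices of the per-run parameters -/

lemma exists_tau (ξ η : ℕ → ℝ) (hξ0 : ∀ j, 0 ≤ ξ j) (hη0 : ∀ j, 0 ≤ η j)
    (hηa : Antitone η) {A B : ℕ}
    (h3 : ∑ j ∈ Ico A B, ξ j ≤ ∑ j ∈ Ico A B, η j) :
    ∃ τ, 0 ≤ τ ∧ ∑ j ∈ Ico A B, min (η j) (ξ j + τ) = ∑ j ∈ Ico A B, ξ j := by
  have hcont : Continuous fun c : ℝ => ∑ j ∈ Ico A B, min (η j) (ξ j + c) :=
    continuous_finset_sum _ fun j _ => continuous_const.min (continuous_const.add continuous_id)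
  have h0 : (∑ j ∈ Ico A B, min (η j) (ξ j + 0)) ≤ ∑ j ∈ Ico A B, ξ j :=
    sum_le_sum fun j _ => by simpa using min_le_right (η j) (ξ j + 0)
  have hA : (∑ j ∈ Ico A B, min (η j) (ξ j + η A)) = ∑ j ∈ Ico A B, η j :=
    sum_congr rfl fun j hj =>
      min_eq_left (le_trans (hηa (mem_Ico.mp hj).1) (le_add_of_nonneg_left (hξ0 j)))
  have hmem : (∑ j ∈ Ico A B, ξ j) ∈
      Set.Icc (∑ j ∈ Ico A B, min (η j) (ξ j + 0)) (∑ j ∈ Ico A B, min (η j) (ξ j + η A)) :=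
    ⟨h0, by rw [hA]; exact h3⟩
  obtain ⟨τ, hτmem, hτeq⟩ := intermediate_value_Icc (hη0 A) hcont.continuousOn hmem
  exact ⟨τ, hτmem.1, hτeq⟩

lemma exists_sigma (ξ η : ℕ → ℝ) (hξ0 : ∀ j, 0 ≤ ξ j) (hη0 : ∀ j, 0 ≤ η j)
    (hηa : Antitone η) {A B : ℕ}
    (h3 : ∑ j ∈ Ico A B, ξ j ≤ ∑ j ∈ Ico A B, η j) :
    ∃ σ, 0 ≤ σ ∧ ∑ j ∈ Ico A B, max (ξ j) (η j - σ) = ∑ j ∈ Ico A B, η j := by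
  have hcont : Continuous fun c : ℝ => ∑ j ∈ Ico A B, max (ξ j) (η j - c) :=
    continuous_finset_sum _ fun j _ => continuous_const.max (continuous_const.sub continuous_id)
  have h0 : (∑ j ∈ Ico A B, η j) ≤ ∑ j ∈ Ico A B, max (ξ j) (η j - 0) :=
    sum_le_sum fun j _ => by simpa using le_max_right (ξ j) (η j - 0)
  have hA : (∑ j ∈ Ico A B, max (ξ j) (η j - η A)) = ∑ j ∈ Ico A B, ξ j :=
    sum_congr rfl fun j hj =>
      max_eq_left (le_trans (sub_nonpos.mpr (hηa (mem_Ico.mp hj).1)) (hξ0 j))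
  have hmem : (∑ j ∈ Ico A B, η j) ∈
      Set.Icc (∑ j ∈ Ico A B, max (ξ j) (η j - η A)) (∑ j ∈ Ico A B, max (ξ j) (η j - 0)) :=
    ⟨by rw [hA]; exact h3, h0⟩
  obtain ⟨σ, hσmem, hσeq⟩ := intermediate_value_Icc' (hη0 A) hcont.continuousOn hmem
  exact ⟨σ, hσmem.1, hσeq⟩


/-! ### the per-run construction of `ζ` and `ρ` -/

lemma run (ξ η : ℕ → ℝ) (hξ0 : ∀ j, 0 ≤ ξ j) (hξa : Antitone ξ)
    (hη0 : ∀ j, 0 ≤ η j) (hηa : Antitone η)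
    (r a : ℕ → ℕ) (hr0 : r 0 = 0) (hrm : StrictMono r)
    (hra1 : ∀ t, r t ≤ a t) (hra2 : ∀ t, a t < r (t + 1))
    (hR1 : ∀ t j, r t ≤ j → j < a t → ξ j ≤ η j)
    (hR2 : ∀ t m, a t < m → m ≤ r (t + 1) →
      ∑ j ∈ Ico m (r (t + 1)), η j ≤ ∑ j ∈ Ico m (r (t + 1)), ξ j)
    (hR3 : ∀ t, ∑ j ∈ Ico (r t) (r (t + 1)), ξ j ≤ ∑ j ∈ Ico (r t) (r (t + 1)), η j)
    (hR4 : ∀ t, η (r (t + 1)) ≤ ξ (r (t + 1) - 1) ∨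
      ((r (t + 1) = r t + 1 ∧ a t = r t) ∧ (r (t + 2) = r (t + 1) + 1 ∧ a (t + 1) = r (t + 1)))) :
    (∃ ζ : ℕ → ℝ, (∀ j, 0 ≤ ζ j) ∧ (∀ j, ζ j ≤ η j) ∧ Antitone ζ ∧
      (∀ m, ∑ j ∈ range m, ξ j ≤ ∑ j ∈ range m, ζ j) ∧
      (∀ t, ∑ j ∈ range (r t), ζ j = ∑ j ∈ range (r t), ξ j)) ∧
    (∃ ρ : ℕ → ℝ, (∀ j, ξ j ≤ ρ j) ∧ (∀ j, ρ j ≤ ξ j + η j) ∧ Antitone ρ ∧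
      (∀ m, ∑ j ∈ range m, ρ j ≤ ∑ j ∈ range m, η j) ∧
      (∀ t, ∑ j ∈ range (r t), ρ j = ∑ j ∈ range (r t), η j)) := by
  have hτex : ∀ t, ∃ τ, 0 ≤ τ ∧
      ∑ j ∈ Ico (r t) (r (t + 1)), min (η j) (ξ j + τ) = ∑ j ∈ Ico (r t) (r (t + 1)), ξ j :=
    fun t => exists_tau ξ η hξ0 hη0 hηa (hR3 t)
  have hσex : ∀ t, ∃ σ, 0 ≤ σ ∧
      ∑ j ∈ Ico (r t) (r (t + 1)), max (ξ j) (η j - σ) = ∑ j ∈ Ico (r t) (r (t + 1)), η j :=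
    fun t => exists_sigma ξ η hξ0 hη0 hηa (hR3 t)
  choose τ hτ0 hτeq using hτex
  choose σ hσ0 hσeq using hσex
  set I : ℕ → ℕ := fun j => Nat.findGreatest (fun t => r t ≤ j) j with hIdef
  have hI1 : ∀ j, r (I j) ≤ j := fun j => idx_le hr0 j
  have hI2 : ∀ j, j < r (I j + 1) := fun j => idx_lt hrm hr0 j
  have hIeq : ∀ {t j : ℕ}, r t ≤ j → j < r (t + 1) → I j = t :=
    fun h1 h2 => idx_eq hrm hr0 h1 h2
  set ζ : ℕ → ℝ := fun j => min (η j) (ξ j + τ (I j)) with hζdef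
  set ρ : ℕ → ℝ := fun j => max (ξ j) (η j - σ (I j)) with hρdef
  -- block sums
  have hIco : ∀ t j, j ∈ Ico (r t) (r (t + 1)) → I j = t := by
    intro t j hj
    exact hIeq (mem_Ico.mp hj).1 (mem_Ico.mp hj).2
  have hblockζ : ∀ t, ∑ j ∈ Ico (r t) (r (t + 1)), ζ j = ∑ j ∈ Ico (r t) (r (t + 1)), ξ j := by
    intro t
    rw [← hτeq t]
    exact sum_congr rfl fun j hj => by simp only [hζdef, hIco t j hj]
  have hblockρ : ∀ t, ∑ j ∈ Ico (r t) (r (t + 1)), ρ j = ∑ j ∈ Ico (r t) (r (t + 1)), η j := by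
    intro t
    rw [← hσeq t]
    exact sum_congr rfl fun j hj => by simp only [hρdef, hIco t j hj]
  -- splitting of range sums at run boundaries
  have hsplit : ∀ (f : ℕ → ℝ) (p q : ℕ), p ≤ q →
      ∑ j ∈ range q, f j = (∑ j ∈ range p, f j) + ∑ j ∈ Ico p q, f j := by
    intro f p q hpq
    rw [range_eq_Ico, range_eq_Ico, ← Finset.sum_Ico_consecutive f (Nat.zero_le p) hpq]
  -- boundary equalities
  have hbζ : ∀ t, ∑ j ∈ range (r t), ζ j = ∑ j ∈ range (r t), ξ j := by
    intro t
    induction t with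
    | zero => rw [hr0]; simp
    | succ t ih =>
        rw [hsplit ζ (r t) (r (t + 1)) (hrm.monotone (Nat.le_succ t)),
          hsplit ξ (r t) (r (t + 1)) (hrm.monotone (Nat.le_succ t)), ih, hblockζ t]
  have hbρ : ∀ t, ∑ j ∈ range (r t), ρ j = ∑ j ∈ range (r t), η j := by
    intro t
    induction t with
    | zero => rw [hr0]; simp
    | succ t ih =>
        rw [hsplit ρ (r t) (r (t + 1)) (hrm.monotone (Nat.le_succ t)),
          hsplit η (r t) (r (t + 1)) (hrm.monotone (Nat.le_succ t)), ih, hblockρ t]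
  -- simple pointwise bounds
  have hζ0 : ∀ j, 0 ≤ ζ j := fun j =>
    le_min (hη0 j) (add_nonneg (hξ0 j) (hτ0 (I j)))
  have hζη : ∀ j, ζ j ≤ η j := fun j => min_le_left _ _
  have hξρ : ∀ j, ξ j ≤ ρ j := fun j => le_max_left _ _
  have hρle : ∀ j, ρ j ≤ ξ j + η j := fun j =>
    max_le (le_add_of_nonneg_right (hη0 j))
      (le_add_of_nonneg_left (hξ0 j) |>.trans' (by linarith [hσ0 (I j)]))
  -- within-run prefix inequalities
  have hwζ : ∀ t m, r t ≤ m → m ≤ r (t + 1) →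
      ∑ j ∈ Ico (r t) m, ξ j ≤ ∑ j ∈ Ico (r t) m, ζ j := by
    intro t m h1 h2
    by_cases hm : m ≤ a t
    · refine sum_le_sum fun j hj => ?_
      have hj' := mem_Ico.mp hj
      exact le_min (hR1 t j hj'.1 (lt_of_lt_of_le hj'.2 hm))
        (le_add_of_nonneg_right (hτ0 (I j)))
    · push_neg at hm
      have e1 : ∑ j ∈ Ico (r t) m, ζ j =
          (∑ j ∈ Ico (r t) (r (t + 1)), ζ j) - ∑ j ∈ Ico m (r (t + 1)), ζ j := by
        rw [← Finset.sum_Ico_consecutive ζ h1 h2]; ring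
      have e2 : ∑ j ∈ Ico (r t) m, ξ j =
          (∑ j ∈ Ico (r t) (r (t + 1)), ξ j) - ∑ j ∈ Ico m (r (t + 1)), ξ j := by
        rw [← Finset.sum_Ico_consecutive ξ h1 h2]; ring
      rw [e1, e2, hblockζ t]
      have h3 : ∑ j ∈ Ico m (r (t + 1)), ζ j ≤ ∑ j ∈ Ico m (r (t + 1)), η j :=
        sum_le_sum fun j _ => hζη j
      have h4 := hR2 t m hm h2
      linarith
  have hwρ : ∀ t m, r t ≤ m → m ≤ r (t + 1) →
      ∑ j ∈ Ico (r t) m, ρ j ≤ ∑ j ∈ Ico (r t) m, η j := by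
    intro t m h1 h2
    by_cases hm : m ≤ a t
    · refine sum_le_sum fun j hj => ?_
      have hj' := mem_Ico.mp hj
      exact max_le (hR1 t j hj'.1 (lt_of_lt_of_le hj'.2 hm))
        (sub_le_self _ (hσ0 (I j)))
    · push_neg at hm
      have e1 : ∑ j ∈ Ico (r t) m, ρ j =
          (∑ j ∈ Ico (r t) (r (t + 1)), ρ j) - ∑ j ∈ Ico m (r (t + 1)), ρ j := by
        rw [← Finset.sum_Ico_consecutive ρ h1 h2]; ring
      have e2 : ∑ j ∈ Ico (r t) m, η j =
          (∑ j ∈ Ico (r t) (r (t + 1)), η j) - ∑ j ∈ Ico m (r (t + 1)), η j := by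
        rw [← Finset.sum_Ico_consecutive η h1 h2]; ring
      rw [e1, e2, hblockρ t]
      have h3 : ∑ j ∈ Ico m (r (t + 1)), ξ j ≤ ∑ j ∈ Ico m (r (t + 1)), ρ j :=
        sum_le_sum fun j _ => hξρ j
      have h4 := hR2 t m hm h2
      linarith
  -- global prefix inequalities
  have hprefζ : ∀ m, ∑ j ∈ range m, ξ j ≤ ∑ j ∈ range m, ζ j := by
    intro m
    rw [hsplit ζ (r (I m)) m (hI1 m), hsplit ξ (r (I m)) m (hI1 m), hbζ (I m)]
    exact add_le_add_right (hwζ (I m) m (hI1 m) (le_of_lt (hI2 m))) _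
  have hprefρ : ∀ m, ∑ j ∈ range m, ρ j ≤ ∑ j ∈ range m, η j := by
    intro m
    rw [hsplit ρ (r (I m)) m (hI1 m), hsplit η (r (I m)) m (hI1 m), hbρ (I m)]
    exact add_le_add_right (hwρ (I m) m (hI1 m) (le_of_lt (hI2 m))) _
  -- singleton-run values
  have hvalζ : ∀ t, r (t + 1) = r t + 1 → ζ (r t) = ξ (r t) := by
    intro t h
    have := hblockζ t
    rw [h] at this
    simpa using this
  have hvalρ : ∀ t, r (t + 1) = r t + 1 → ρ (r t) = η (r t) := by
    intro t h
    have := hblockρ t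
    rw [h] at this
    simpa using this
  -- antitonicity
  have hmonoζ : Antitone ζ := by
    apply antitone_nat_of_succ_le
    intro j
    have h1 := hI1 j
    have h2 := hI2 j
    by_cases hb : j + 1 < r (I j + 1)
    · have hI' : I (j + 1) = I j := hIeq (le_trans h1 (Nat.le_succ j)) hb
      show min (η (j+1)) (ξ (j+1) + τ (I (j+1))) ≤ min (η j) (ξ j + τ (I j))
      rw [hI']
      exact min_le_min (hηa (Nat.le_succ j)) (add_le_add_left (hξa (Nat.le_succ j)) _)
    · have hj1 : j + 1 = r (I j + 1) := by omega
      have hI' : I (j + 1) = I j + 1 :=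
        hIeq (le_of_eq hj1.symm) (by rw [hj1]; exact hrm (Nat.lt_succ_self _))
      rcases hR4 (I j) with hgood | ⟨⟨e1, e2⟩, ⟨f1, f2⟩⟩
      · have hj' : r (I j + 1) - 1 = j := by omega
        rw [hj'] at hgood
        have hgj : η (j + 1) ≤ ξ j := by rw [hj1]; exact hgood
        calc ζ (j + 1) ≤ η (j + 1) := hζη (j + 1)
          _ ≤ min (η j) (ξ j + τ (I j)) :=
            le_min (hηa (Nat.le_succ j))
              (le_trans hgj (le_add_of_nonneg_right (hτ0 (I j))))
          _ = ζ j := rfl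
      · have hjr : j = r (I j) := by omega
        have hζj : ζ j = ξ j := by rw [hjr]; exact hvalζ (I j) e1
        have hζj1 : ζ (j + 1) = ξ (j + 1) := by
          have := hvalζ (I j + 1) f1
          rw [← hj1] at this
          exact this
        rw [hζj, hζj1]
        exact hξa (Nat.le_succ j)
  have hmonoρ : Antitone ρ := by
    apply antitone_nat_of_succ_le
    intro j
    have h1 := hI1 j
    have h2 := hI2 j
    by_cases hb : j + 1 < r (I j + 1)
    · have hI' : I (j + 1) = I j := hIeq (le_trans h1 (Nat.le_succ j)) hb
      show max (ξ (j+1)) (η (j+1) - σ (I (j+1))) ≤ max (ξ j) (η j - σ (I j))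
      rw [hI']
      exact max_le_max (hξa (Nat.le_succ j)) (sub_le_sub_right (hηa (Nat.le_succ j)) _)
    · have hj1 : j + 1 = r (I j + 1) := by omega
      have hI' : I (j + 1) = I j + 1 :=
        hIeq (le_of_eq hj1.symm) (by rw [hj1]; exact hrm (Nat.lt_succ_self _))
      rcases hR4 (I j) with hgood | ⟨⟨e1, e2⟩, ⟨f1, f2⟩⟩
      · have hj' : r (I j + 1) - 1 = j := by omega
        rw [hj'] at hgood
        have hgj : η (j + 1) ≤ ξ j := by rw [hj1]; exact hgood
        have hb1 : ξ (j + 1) ≤ ξ j := hξa (Nat.le_succ j)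
        have hb2 : η (j + 1) - σ (I (j + 1)) ≤ ξ j :=
          le_trans (sub_le_self _ (hσ0 _)) hgj
        calc ρ (j + 1) ≤ ξ j := max_le hb1 hb2
          _ ≤ ρ j := hξρ j
      · have hjr : j = r (I j) := by omega
        have hρj : ρ j = η j := by rw [hjr]; exact hvalρ (I j) e1
        have hρj1 : ρ (j + 1) = η (j + 1) := by
          have := hvalρ (I j + 1) f1
          rw [← hj1] at this
          exact this
        rw [hρj, hρj1]
        exact hηa (Nat.le_succ j)
  exact ⟨⟨ζ, hζ0, hζη, hmonoζ, hprefζ, hbζ⟩, ⟨ρ, hξρ, hρle, hmonoρ, hprefρ, hbρ⟩⟩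


/-! ### building run data from condition (ii) -/

lemma key (ξ η : ℕ → ℝ) (hξ : IsCoStar ξ) (hη : IsCoStar η)
    (hMaj : Maj ξ η)
    (hmin : ∀ m : ℕ, ∃ nn, m ≤ nn ∧ ∀ n', m ≤ n' →
      ∑ j ∈ range nn, (η j - ξ j) ≤ ∑ j ∈ range n', (η j - ξ j)) :
    (∃ ζ, IsCoStar ζ ∧ BMaj ξ ζ ∧ ∀ j, ζ j ≤ η j) ∧
    (∃ ρ, IsCoStar ρ ∧ (∀ j, ξ j ≤ ρ j) ∧ BMaj ρ η) := by
  classical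
  obtain ⟨hξ0, hξa, hξt⟩ := hξ
  obtain ⟨hη0, hηa, hηt⟩ := hη
  set D : ℕ → ℝ := fun m => ∑ j ∈ range m, (η j - ξ j) with hDdef
  have hD0 : ∀ m, 0 ≤ D m := by
    intro m
    have := hMaj m
    simp only [hDdef, Finset.sum_sub_distrib]
    linarith
  have hDstep : ∀ m, D (m + 1) = D m + (η m - ξ m) := fun m => Finset.sum_range_succ _ m
  have hDIco : ∀ p q : ℕ, p ≤ q →
      (∑ j ∈ Ico p q, η j) - (∑ j ∈ Ico p q, ξ j) = D q - D p := by
    intro p q hpq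
    rw [Finset.sum_Ico_eq_sub η hpq, Finset.sum_Ico_eq_sub ξ hpq]
    simp only [hDdef, Finset.sum_sub_distrib]
    ring
  choose F hF1 hF2 using hmin
  obtain ⟨n, hn0, hnSdef⟩ : ∃ n : ℕ → ℕ, n 0 = 0 ∧ ∀ k, n (k + 1) = F (n k + 1) :=
    ⟨fun k => Nat.rec 0 (fun _ p => F (p + 1)) k, rfl, fun _ => rfl⟩
  have hnlt : ∀ k, n k < n (k + 1) := by
    intro k
    rw [hnSdef]
    exact lt_of_lt_of_le (Nat.lt_succ_self _) (hF1 _)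
  have hnS : StrictMono n := strictMono_nat_of_lt_succ hnlt
  have hnmin : ∀ k m, n k + 1 ≤ m → D (n (k + 1)) ≤ D m := by
    intro k m h
    rw [hnSdef]
    exact hF2 _ _ h
  have hnD : ∀ k, D (n k) ≤ D (n (k + 1)) := by
    intro k
    cases k with
    | zero => rw [hn0]; simpa [hDdef] using hD0 (n 1)
    | succ k => exact hnmin k (n (k + 2)) (by have h := hnS (show k < k + 2 by omega); omega)
  have hDmono : Monotone fun k => D (n k) := monotone_nat_of_le_succ hnD
  set Good : ℕ → Prop := fun k => η (n (k + 1)) ≤ ξ (n (k + 1) - 1) with hGooddef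
  have hsing : ∀ k, ¬ Good k → n (k + 1) = n k + 1 := by
    intro k hk
    by_contra h2
    have hge : n k + 2 ≤ n (k + 1) := by have := hnlt k; omega
    set m := n (k + 1) - 1 with hm
    have hm1 : n k + 1 ≤ m := by omega
    have hm2 : m + 1 = n (k + 1) := by omega
    have h3 : D (n (k + 1)) ≤ D m := hnmin k m hm1
    rw [← hm2, hDstep] at h3
    have h4 : η m ≤ ξ m := by linarith
    exact hk (le_trans (by rw [← hm2]; exact hηa (Nat.le_succ m)) h4)
  have hsing2 : ∀ k, n (k + 1) = n k + 1 → ξ (n k) ≤ η (n k) := by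
    intro k hk
    have := hnD k
    rw [hk, hDstep] at this
    linarith
  set Good' : ℕ → Prop := fun k => Good k ∨ ∀ i, k ≤ i → ¬ Good i with hGood'def
  have hGG' : ∀ k, Good k → Good' k := fun k h => Or.inl h
  have hGi' : ∀ s, ∃ k, s ≤ k ∧ Good' k := by
    intro s
    by_cases h : ∃ k, s ≤ k ∧ Good k
    · obtain ⟨k, h1, h2⟩ := h
      exact ⟨k, h1, Or.inl h2⟩
    · push_neg at h
      exact ⟨s, le_rfl, Or.inr fun i hi => h i hi⟩
  set L : ℕ → ℕ := fun s => Nat.find (hGi' s) with hLdef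
  have hL1 : ∀ s, s ≤ L s ∧ Good' (L s) := fun s => Nat.find_spec (hGi' s)
  have hL2 : ∀ s i, s ≤ i → Good' i → L s ≤ i := fun s i h1 h2 => Nat.find_min' _ ⟨h1, h2⟩
  obtain ⟨G, hG0, hGs⟩ : ∃ G : ℕ → ℕ, G 0 = L 0 ∧ ∀ t, G (t + 1) = L (G t + 1) :=
    ⟨fun t => Nat.rec (L 0) (fun _ p => L (p + 1)) t, rfl, fun _ => rfl⟩
  have hGp : ∀ t, Good' (G t) := by
    intro t
    cases t with
    | zero => rw [hG0]; exact (hL1 0).2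
    | succ t => rw [hGs]; exact (hL1 _).2
  have hGlt : ∀ t, G t < G (t + 1) := by
    intro t
    rw [hGs]
    exact lt_of_lt_of_le (Nat.lt_succ_self _) (hL1 _).1
  have hGmin0 : ∀ i, i < G 0 → ¬ Good' i := by
    intro i h1 h2
    have := hL2 0 i (Nat.zero_le i) h2
    rw [← hG0] at this
    omega
  have hGmins : ∀ t i, G t < i → i < G (t + 1) → ¬ Good' i := by
    intro t i h1 h2 h3
    have := hL2 (G t + 1) i h1 h3
    rw [← hGs] at this
    omega
  -- the runs
  set r : ℕ → ℕ := fun t => Nat.rec 0 (fun t' _ => n (G t' + 1)) t with hrdef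
  have hr0 : r 0 = 0 := rfl
  have hrS : ∀ t, r (t + 1) = n (G t + 1) := fun _ => rfl
  set a : ℕ → ℕ := fun t => n (G t) with hadef
  have hrm : StrictMono r := by
    apply strictMono_nat_of_lt_succ
    intro t
    cases t with
    | zero =>
        rw [hr0, hrS]
        calc 0 = n 0 := hn0.symm
          _ < n (G 0 + 1) := hnS (Nat.succ_pos _)
    | succ t =>
        rw [hrS, hrS]
        exact hnS (by have := hGlt t; omega)
  have hra1 : ∀ t, r t ≤ a t := by
    intro t
    cases t with
    | zero => exact Nat.zero_le _
    | succ t =>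
        rw [hrS, hadef]
        exact hnS.monotone (hGlt t)
  have hra2 : ∀ t, a t < r (t + 1) := by
    intro t
    rw [hrS, hadef]
    exact hnS (Nat.lt_succ_self _)
  -- block index machinery for n
  set J : ℕ → ℕ := fun j => Nat.findGreatest (fun k => n k ≤ j) j with hJdef
  have hJ1 : ∀ j, n (J j) ≤ j := fun j => idx_le hn0 j
  have hJ2 : ∀ j, j < n (J j + 1) := fun j => idx_lt hnS hn0 j
  -- run hypotheses
  have hR1 : ∀ t j, r t ≤ j → j < a t → ξ j ≤ η j := by
    intro t j h1 h2
    set k := J j with hk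
    have hk1 : n k ≤ j := hJ1 j
    have hk2 : j < n (k + 1) := hJ2 j
    have hkG : k < G t := by
      have h3 : n k < n (G t) := lt_of_le_of_lt hk1 h2
      exact hnS.lt_iff_lt.mp h3
    have hnotG' : ¬ Good' k := by
      cases t with
      | zero => exact hGmin0 k hkG
      | succ t' =>
          have h3 : n (G t' + 1) ≤ j := h1
          have h4 : G t' < k := by
            have h5 : n (G t' + 1) < n (k + 1) := lt_of_le_of_lt h3 hk2
            have := hnS.lt_iff_lt.mp h5
            omega
          exact hGmins t' k h4 hkG
    have hnotG : ¬ Good k := fun h => hnotG' (hGG' k h)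
    have hss := hsing k hnotG
    have hjn : j = n k := by omega
    rw [hjn]
    exact hsing2 k hss
  have hR2 : ∀ t m, a t < m → m ≤ r (t + 1) →
      ∑ j ∈ Ico m (r (t + 1)), η j ≤ ∑ j ∈ Ico m (r (t + 1)), ξ j := by
    intro t m h1 h2
    have h3 : D (r (t + 1)) ≤ D m := by
      rw [hrS]
      exact hnmin (G t) m (by have h1' : n (G t) < m := h1; omega)
    have := hDIco m (r (t + 1)) h2
    linarith
  have hR3 : ∀ t, ∑ j ∈ Ico (r t) (r (t + 1)), ξ j ≤ ∑ j ∈ Ico (r t) (r (t + 1)), η j := by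
    intro t
    have hle : r t ≤ r (t + 1) := (hrm (Nat.lt_succ_self t)).le
    have h3 : D (r t) ≤ D (r (t + 1)) := by
      cases t with
      | zero =>
          rw [hr0]
          simpa [hDdef] using hD0 (r 1)
      | succ t' =>
          rw [hrS, hrS]
          exact hDmono (by have := hGlt t'; omega)
    have := hDIco (r t) (r (t + 1)) hle
    linarith
  -- the anchoring lemma in the "beyond all good" case
  have hanchor : ∀ t, (∀ i, G t ≤ i → ¬ Good i) → r (t + 1) = r t + 1 ∧ a t = r t := by
    intro t bey
    cases t with
    | zero =>
        have hG00 : G 0 = 0 := by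
          have hg0 : Good' 0 := by
            refine Or.inr fun i _ => ?_
            by_cases hi : i < G 0
            · exact fun h => (hGmin0 i hi) (hGG' i h)
            · exact bey i (by omega)
          have := hL2 0 0 le_rfl hg0
          rw [← hG0] at this
          omega
        have hng : ¬ Good 0 := bey 0 (by omega)
        have hs := hsing 0 hng
        constructor
        · rw [hrS, hr0, hG00, hs, hn0]
        · show n (G 0) = r 0
          rw [hG00, hn0, hr0]
    | succ t' =>
        have hGt : G (t' + 1) = G t' + 1 := by
          have hg : Good' (G t' + 1) := by
            refine Or.inr fun i hi => ?_
            by_cases hi2 : i < G (t' + 1)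
            · exact fun h => (hGmins t' i (by omega) hi2) (hGG' i h)
            · exact bey i (by omega)
          have h6 := hL2 (G t' + 1) (G t' + 1) le_rfl hg
          rw [← hGs] at h6
          have := hGlt t'
          omega
        have hng : ¬ Good (G (t' + 1)) := bey _ le_rfl
        have hs := hsing _ hng
        constructor
        · rw [hrS, hrS, hs, hGt]
        · show n (G (t' + 1)) = r (t' + 1)
          rw [hrS, hGt]
  have hR4 : ∀ t, η (r (t + 1)) ≤ ξ (r (t + 1) - 1) ∨
      ((r (t + 1) = r t + 1 ∧ a t = r t) ∧ (r (t + 2) = r (t + 1) + 1 ∧ a (t + 1) = r (t + 1))) := by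
    intro t
    by_cases hg : Good (G t)
    · left
      rw [hrS]
      exact hg
    · right
      have bey : ∀ i, G t ≤ i → ¬ Good i := (hGp t).resolve_left hg
      exact ⟨hanchor t bey, hanchor (t + 1) fun i hi => bey i (le_trans (hGlt t).le hi)⟩
  -- apply the run construction
  obtain ⟨⟨ζ, hζ0, hζη, hζmono, hζpref, hζb⟩, ⟨ρ, hξρ, hρle, hρmono, hρpref, hρb⟩⟩ :=
    run ξ η hξ0 hξa hη0 hηa r a hr0 hrm hra1 hra2 hR1 hR2 hR3 hR4
  constructor
  · refine ⟨ζ, ⟨hζ0, hζmono, squeeze_zero hζ0 hζη hηt⟩, ⟨hζpref, ?_⟩, hζη⟩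
    refine ⟨fun k => r (k + 1), fun k k' h => hrm (Nat.succ_lt_succ h), fun k => ?_, fun k => (hζb (k + 1)).symm⟩
    calc 0 = r 0 := hr0.symm
      _ < r (k + 1) := hrm (Nat.succ_pos k)
  · refine ⟨ρ, ⟨fun j => le_trans (hξ0 j) (hξρ j), hρmono, ?_⟩, hξρ, ⟨hρpref, ?_⟩⟩
    · refine squeeze_zero (fun j => le_trans (hξ0 j) (hξρ j)) hρle ?_
      simpa using hξt.add hηt
    · refine ⟨fun k => r (k + 1), fun k k' h => hrm (Nat.succ_lt_succ h), fun k => ?_, fun k => hρb (k + 1)⟩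
      calc 0 = r 0 := hr0.symm
        _ < r (k + 1) := hrm (Nat.succ_pos k)

end Stmt16Aux



open Stmt16Aux in
/-- For `ξ, η ∈ c₀*` the following are equivalent:
(i) there is `0 = n_0 < n_1 < …` such that each shifted tail of `ξ` starting at an `n_k`
is majorized by the corresponding tail of `η`;
(ii) `ξ ≺ η` and for every `m` the set `{∑_{j<n} (η_j − ξ_j) : n ≥ m}` attains a minimum;
(iii) `ξ ≺_b ζ ≤ η` for some `ζ ∈ c₀*`;
(iii') `ξ ≤ ρ ≺_b η` for some `ρ ∈ c₀*`. -/
theorem stmt_16 (ξ η : ℕ → ℝ) (hξ : IsCoStar ξ) (hη : IsCoStar η) :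
    List.TFAE
      [ (∃ n : ℕ → ℕ, n 0 = 0 ∧ StrictMono n ∧
          ∀ k m, n k < m →
            ∑ j ∈ Finset.Ico (n k) m, ξ j ≤ ∑ j ∈ Finset.Ico (n k) m, η j),
        (Maj ξ η ∧ ∀ m : ℕ, ∃ n, m ≤ n ∧ ∀ n', m ≤ n' →
          ∑ j ∈ range n, (η j - ξ j) ≤ ∑ j ∈ range n', (η j - ξ j)),
        (∃ ζ : ℕ → ℝ, IsCoStar ζ ∧ BMaj ξ ζ ∧ ∀ j, ζ j ≤ η j),
        (∃ ρ : ℕ → ℝ, IsCoStar ρ ∧ (∀ j, ξ j ≤ ρ j) ∧ BMaj ρ η) ] := by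
  classical
  tfae_have 1 → 2 := by
    rintro ⟨nn, hnn0, hnnS, hnnP⟩
    have hMaj : Maj ξ η := by
      intro m
      rcases Nat.eq_zero_or_pos m with hm | hm
      · simp [hm]
      · have h := hnnP 0 m (by rw [hnn0]; exact hm)
        rw [hnn0] at h
        rwa [← range_eq_Ico] at h
    refine ⟨hMaj, fun m => ?_⟩
    set D : ℕ → ℝ := fun p => ∑ j ∈ range p, (η j - ξ j) with hD
    have hDmaj : ∀ p q : ℕ, p ≤ q → (∑ j ∈ Ico p q, ξ j ≤ ∑ j ∈ Ico p q, η j) →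
        D p ≤ D q := by
      intro p q hpq h
      rw [Finset.sum_Ico_eq_sub ξ hpq, Finset.sum_Ico_eq_sub η hpq] at h
      simp only [hD, Finset.sum_sub_distrib]
      linarith
    obtain ⟨b, hb, hbmin⟩ := (Finset.Icc m (nn m)).exists_min_image D
      ⟨m, Finset.mem_Icc.mpr ⟨le_rfl, hnnS.le_apply⟩⟩
    have hbm := Finset.mem_Icc.mp hb
    refine ⟨b, hbm.1, fun n' hn' => ?_⟩
    by_cases h : n' ≤ nn m
    · exact hbmin n' (Finset.mem_Icc.mpr ⟨hn', h⟩)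
    · push_neg at h
      have h1 : D (nn m) ≤ D n' := hDmaj _ _ (le_of_lt h) (hnnP m n' h)
      exact le_trans (hbmin (nn m) (Finset.mem_Icc.mpr ⟨hnnS.le_apply, le_rfl⟩)) h1
  tfae_have 2 → 1 := by
    rintro ⟨hMaj, hmin⟩
    set D : ℕ → ℝ := fun p => ∑ j ∈ range p, (η j - ξ j) with hD
    have hDle : ∀ p q : ℕ, p ≤ q → D p ≤ D q →
        ∑ j ∈ Ico p q, ξ j ≤ ∑ j ∈ Ico p q, η j := by
      intro p q hpq h
      rw [Finset.sum_Ico_eq_sub ξ hpq, Finset.sum_Ico_eq_sub η hpq]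
      simp only [hD, Finset.sum_sub_distrib] at h
      linarith
    choose F hF1 hF2 using hmin
    obtain ⟨n, hn0, hnSdef⟩ : ∃ n : ℕ → ℕ, n 0 = 0 ∧ ∀ k, n (k + 1) = F (n k + 1) :=
      ⟨fun k => Nat.rec 0 (fun _ p => F (p + 1)) k, rfl, fun _ => rfl⟩
    have hnlt : ∀ k, n k < n (k + 1) := by
      intro k; rw [hnSdef]; exact lt_of_lt_of_le (Nat.lt_succ_self _) (hF1 _)
    refine ⟨n, hn0, strictMono_nat_of_lt_succ hnlt, ?_⟩
    intro k m hm
    apply hDle _ _ (le_of_lt hm)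
    cases k with
    | zero =>
        rw [hn0]
        simpa [hD, Finset.sum_sub_distrib, sub_nonneg] using hMaj m
    | succ k =>
        rw [hnSdef]
        exact hF2 _ _ (by have := hnlt k; omega)
  tfae_have 2 → 3 := fun h => (Stmt16Aux.key ξ η hξ hη h.1 h.2).1
  tfae_have 2 → 4 := fun h => (Stmt16Aux.key ξ η hξ hη h.1 h.2).2
  tfae_have 3 → 1 := by
    rintro ⟨ζ, hζ, ⟨hMajζ, mk, hmkS, hmkpos, hmkeq⟩, hζη⟩
    obtain ⟨nn, hnn0, hnnS'⟩ : ∃ nn : ℕ → ℕ, nn 0 = 0 ∧ ∀ k, nn (k + 1) = mk k :=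
      ⟨fun k => Nat.rec 0 (fun k' _ => mk k') k, rfl, fun _ => rfl⟩
    refine ⟨nn, hnn0, ?_, ?_⟩
    · apply strictMono_nat_of_lt_succ
      intro k
      cases k with
      | zero => rw [hnn0, hnnS']; exact hmkpos 0
      | succ k => rw [hnnS', hnnS']; exact hmkS (Nat.lt_succ_self k)
    · intro k m hm
      cases k with
      | zero =>
          rw [hnn0] at hm ⊢
          rw [← range_eq_Ico]
          exact le_trans (hMajζ m) (sum_le_sum fun j _ => hζη j)
      | succ k =>
          rw [hnnS'] at hm ⊢
          have hle : mk k ≤ m := le_of_lt hm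
          rw [Finset.sum_Ico_eq_sub ξ hle, Finset.sum_Ico_eq_sub η hle]
          have h1 : ∑ j ∈ range m, ξ j ≤ ∑ j ∈ range m, ζ j := hMajζ m
          have e1 : ∑ j ∈ range (mk k), ξ j = ∑ j ∈ range (mk k), ζ j := hmkeq k
          have h2 : (∑ j ∈ range m, ζ j) - ∑ j ∈ range (mk k), ζ j ≤
              (∑ j ∈ range m, η j) - ∑ j ∈ range (mk k), η j := by
            rw [← Finset.sum_Ico_eq_sub ζ hle, ← Finset.sum_Ico_eq_sub η hle]
            exact sum_le_sum fun j _ => hζη j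
          linarith
  tfae_have 4 → 1 := by
    rintro ⟨ρ, hρ, hξρ, ⟨hMajρ, mk, hmkS, hmkpos, hmkeq⟩⟩
    obtain ⟨nn, hnn0, hnnS'⟩ : ∃ nn : ℕ → ℕ, nn 0 = 0 ∧ ∀ k, nn (k + 1) = mk k :=
      ⟨fun k => Nat.rec 0 (fun k' _ => mk k') k, rfl, fun _ => rfl⟩
    refine ⟨nn, hnn0, ?_, ?_⟩
    · apply strictMono_nat_of_lt_succ
      intro k
      cases k with
      | zero => rw [hnn0, hnnS']; exact hmkpos 0
      | succ k => rw [hnnS', hnnS']; exact hmkS (Nat.lt_succ_self k)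
    · intro k m hm
      cases k with
      | zero =>
          rw [hnn0] at hm ⊢
          rw [← range_eq_Ico]
          exact le_trans (sum_le_sum fun j _ => hξρ j) (hMajρ m)
      | succ k =>
          rw [hnnS'] at hm ⊢
          have hle : mk k ≤ m := le_of_lt hm
          rw [Finset.sum_Ico_eq_sub ξ hle, Finset.sum_Ico_eq_sub η hle]
          have h1 : ∑ j ∈ range m, ρ j ≤ ∑ j ∈ range m, η j := hMajρ m
          have e1 : ∑ j ∈ range (mk k), ρ j = ∑ j ∈ range (mk k), η j := hmkeq k
          have h2 : (∑ j ∈ range m, ξ j) - ∑ j ∈ range (mk k), ξ j ≤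
              (∑ j ∈ range m, ρ j) - ∑ j ∈ range (mk k), ρ j := by
            rw [← Finset.sum_Ico_eq_sub ξ hle, ← Finset.sum_Ico_eq_sub ρ hle]
            exact sum_le_sum fun j _ => hξρ j
          linarith
  tfae_finish

end
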